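/- Let (X,d) be a metric space of cardinality 2n and let Π = {{x_1^+,…,x_n^+},{x_1^-,…,x_n^-}} be a partition of X into two n-tuples of points. Then min over permutations σ of {1,…,n} of ∑_{i=1}^n d(x_i^+, x_{σ(i)}^-) equals max over all 1-Lipschitz functions f : X → ℝ of ∑_{i=1}^n (f(x_i^+) − f(x_i^-)), and this maximum is attained by some 1-Lipschitz function f : X → ℝ. -/

import Mathlib

open Finset Function

namespace KantorovichAux

variable {X : Type*} [MetricSpace X] {n : ℕ}

/-- Edge weight of the rerouting graph. -/
noncomputable def W (xp ym : Fin n → X) (i j : Fin n) : ℝ :=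
  dist (xp j) (ym i) - dist (xp j) (ym j)

/-- Weight of the walk `c 0, c 1, ..., c k`. -/
noncomputable def wgt (xp ym : Fin n → X) (c : ℕ → Fin n) (k : ℕ) : ℝ :=
  ∑ t ∈ Finset.range k, W xp ym (c t) (c (t + 1))

lemma cycle_fin (xp ym : Fin n → X)
    (hopt : ∀ σ : Equiv.Perm (Fin n),
      (∑ i, dist (xp i) (ym i)) ≤ ∑ i, dist (xp i) (ym (σ i)))
    (m : ℕ) [NeZero m] (c : Fin m → Fin n) (hc : Function.Injective c) :
    0 ≤ ∑ t : Fin m, W xp ym (c t) (c (t + 1)) := by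
  set ρ : Equiv.Perm (Fin m) := Equiv.subRight (1 : Fin m) with hρ
  set τ : Equiv.Perm (Fin n) := ρ.viaFintypeEmbedding ⟨c, hc⟩ with hτ
  have hτc : ∀ t : Fin m, τ (c t) = c (t - 1) := by
    intro t
    have := Equiv.Perm.viaFintypeEmbedding_apply_image ρ ⟨c, hc⟩ t
    simpa [hρ, hτ, Equiv.subRight] using this
  have hτfix : ∀ i : Fin n, i ∉ Set.range c → τ i = i := by
    intro i hi
    exact Equiv.Perm.viaFintypeEmbedding_apply_notMem_range ρ ⟨c, hc⟩ hi
  set g : Fin n → ℝ := fun i => dist (xp i) (ym (τ i)) - dist (xp i) (ym i) with hg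
  have key : ∑ t : Fin m, W xp ym (c t) (c (t + 1)) = ∑ i, g i := by
    have h1 : ∀ t : Fin m, W xp ym (c t) (c (t + 1)) = g (c (t + 1)) := by
      intro t
      have : τ (c (t + 1)) = c t := by rw [hτc (t + 1)]; congr 1; simp
      simp [W, hg, this]
    calc ∑ t : Fin m, W xp ym (c t) (c (t + 1)) = ∑ t : Fin m, g (c (t + 1)) :=
          Finset.sum_congr rfl fun t _ => h1 t
      _ = ∑ t : Fin m, g (c t) :=
          Fintype.sum_equiv (Equiv.addRight (1 : Fin m)) _ _ (fun t => rfl)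
      _ = ∑ i ∈ Finset.univ.image c, g i := by
          rw [Finset.sum_image (fun a _ b _ h => hc h)]
      _ = ∑ i, g i := by
          apply Finset.sum_subset (Finset.subset_univ _)
          intro i _ hi
          have : i ∉ Set.range c := by
            intro ⟨t, ht⟩
            exact hi (Finset.mem_image.2 ⟨t, Finset.mem_univ t, ht⟩)
          simp [hg, hτfix i this]
  rw [key]
  have h2 : ∑ i, g i = (∑ i, dist (xp i) (ym (τ i))) - ∑ i, dist (xp i) (ym i) := by
    rw [hg, Finset.sum_sub_distrib]
  linarith [hopt τ]

lemma cycle_nat (xp ym : Fin n → X)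
    (hopt : ∀ σ : Equiv.Perm (Fin n),
      (∑ i, dist (xp i) (ym i)) ≤ ∑ i, dist (xp i) (ym (σ i)))
    (k : ℕ) (c : ℕ → Fin n) (hk : 0 < k) (hcyc : c k = c 0)
    (hinj : ∀ s < k, ∀ t < k, c s = c t → s = t) :
    0 ≤ wgt xp ym c k := by
  haveI : NeZero k := ⟨hk.ne'⟩
  set cf : Fin k → Fin n := fun t => c t.val with hcf
  have hcfinj : Function.Injective cf := by
    intro s t h
    exact Fin.ext (hinj s.val s.isLt t.val t.isLt h)
  have hsucc : ∀ t : Fin k, cf (t + 1) = c (t.val + 1) := by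
    intro t
    have hv : ((t + 1 : Fin k) : ℕ) = (t.val + 1) % k := by
      rw [Fin.add_def]
      simp only [Fin.val_one', Nat.add_mod_mod]
    rcases eq_or_lt_of_le (Nat.succ_le_of_lt t.isLt) with h | h
    · rw [Nat.succ_eq_add_one] at h
      have h0 : ((t + 1 : Fin k) : ℕ) = 0 := by rw [hv, h, Nat.mod_self]
      show c _ = _
      rw [h0, ← hcyc]
      congr 1
      omega
    · show c _ = _
      rw [hv, Nat.mod_eq_of_lt h]
  have heq : wgt xp ym c k = ∑ t : Fin k, W xp ym (cf t) (cf (t + 1)) := by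
    rw [wgt, ← Fin.sum_univ_eq_sum_range]
    exact Finset.sum_congr rfl fun t _ => by rw [hsucc t]
  rw [heq]
  exact cycle_fin xp ym hopt k cf hcfinj

/-- Walk surgery: every walk can be shortened to length `≤ n` without increasing weight. -/
lemma exists_short (xp ym : Fin n → X)
    (hopt : ∀ σ : Equiv.Perm (Fin n),
      (∑ i, dist (xp i) (ym i)) ≤ ∑ i, dist (xp i) (ym (σ i)))
    (k : ℕ) (c : ℕ → Fin n) :
    ∃ (k' : ℕ) (c' : ℕ → Fin n), k' ≤ n ∧ c' k' = c k ∧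
      wgt xp ym c' k' ≤ wgt xp ym c k := by
  induction k using Nat.strong_induction_on generalizing c with
  | _ k IH =>
  rcases le_or_gt k n with h | h
  · exact ⟨k, c, h, rfl, le_refl _⟩
  have hpig : ∃ x ∈ Finset.range (n + 1), ∃ y ∈ Finset.range (n + 1), x ≠ y ∧ c x = c y :=
    Finset.exists_ne_map_eq_of_card_lt_of_maps_to (t := (Finset.univ : Finset (Fin n)))
      (by simp) (fun a _ => Finset.mem_univ _)
  have hex : ∃ g, 0 < g ∧ ∃ s, s + g ≤ k ∧ c s = c (s + g) := by
    obtain ⟨x, hx, y, hy, hxy, hcxy⟩ := hpig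
    simp only [Finset.mem_range] at hx hy
    rcases lt_or_gt_of_ne hxy with hlt | hlt
    · exact ⟨y - x, by omega, x, by omega, by rw [hcxy]; congr 1; omega⟩
    · exact ⟨x - y, by omega, y, by omega, by rw [← hcxy]; congr 1; omega⟩
  classical
  set g₀ := Nat.find hex with hg₀
  obtain ⟨hg₀pos, s, hsg, hcs⟩ : 0 < g₀ ∧ ∃ s, s + g₀ ≤ k ∧ c s = c (s + g₀) := Nat.find_spec hex
  have hwindow : ∀ a < g₀, ∀ b < g₀, c (s + a) = c (s + b) → a = b := by
    intro a ha b hb hab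
    by_contra hne
    rcases lt_or_gt_of_ne hne with hlt | hlt
    · exact Nat.find_min hex (show b - a < g₀ by omega)
        ⟨by omega, s + a, by omega, by rw [hab]; congr 1; omega⟩
    · exact Nat.find_min hex (show a - b < g₀ by omega)
        ⟨by omega, s + b, by omega, by rw [← hab]; congr 1; omega⟩
  have hcycle : 0 ≤ wgt xp ym (fun r => c (s + r)) g₀ := by
    apply cycle_nat xp ym hopt g₀ _ hg₀pos
    · simpa using hcs.symm
    · exact hwindow
  set c'' : ℕ → Fin n := fun r => if r ≤ s then c r else c (r + g₀) with hc''
  have hc''r : ∀ r, s ≤ r → c'' r = c (r + g₀) := by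
    intro r hr
    rcases eq_or_lt_of_le hr with h' | h'
    · simp only [hc'']; rw [if_pos (le_of_eq h'.symm), ← h', ← hcs]
    · simp only [hc'']; rw [if_neg (by omega)]
  have hc''l : ∀ r, r ≤ s → c'' r = c r := by
    intro r hr; simp only [hc'']; rw [if_pos hr]
  have hsplit : wgt xp ym c k = wgt xp ym c'' (k - g₀) + wgt xp ym (fun r => c (s + r)) g₀ := by
    obtain ⟨r, hr⟩ : ∃ r, k - s - g₀ = r := ⟨_, rfl⟩
    have hk1 : k = s + g₀ + r := by omega
    have hk2 : k - g₀ = s + r := by omega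
    rw [wgt, wgt, hk2, hk1, Finset.sum_range_add, Finset.sum_range_add, Finset.sum_range_add]
    have t1 : ∑ x ∈ Finset.range s, W xp ym (c'' x) (c'' (x + 1))
        = ∑ x ∈ Finset.range s, W xp ym (c x) (c (x + 1)) := by
      apply Finset.sum_congr rfl
      intro x hx
      simp only [Finset.mem_range] at hx
      rw [hc''l x (by omega), hc''l (x + 1) (by omega)]
    have t2 : ∑ x ∈ Finset.range r, W xp ym (c'' (s + x)) (c'' (s + x + 1))
        = ∑ x ∈ Finset.range r, W xp ym (c (s + g₀ + x)) (c (s + g₀ + x + 1)) := by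
      apply Finset.sum_congr rfl
      intro x hx
      rw [hc''r (s + x) (by omega), hc''r (s + x + 1) (by omega)]
      congr 2 <;> omega
    have t3 : wgt xp ym (fun r => c (s + r)) g₀
        = ∑ x ∈ Finset.range g₀, W xp ym (c (s + x)) (c (s + x + 1)) := by
      rw [wgt]
      apply Finset.sum_congr rfl
      intro x hx
      congr 2
    rw [t1, t2, t3]
    ring
  obtain ⟨k', c', hk', hend, hle⟩ := IH (k - g₀) (by omega) c''
  refine ⟨k', c', hk', ?_, ?_⟩
  · rw [hend, hc''r (k - g₀) (by omega)]
    congr 1; omega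
  · calc wgt xp ym c' k' ≤ wgt xp ym c'' (k - g₀) := hle
      _ ≤ wgt xp ym c k := by rw [hsplit]; linarith

/-- Values of walks ending at `j`. -/
def walkSet (xp ym : Fin n → X) (j : Fin n) : Set ℝ :=
  {w | ∃ (k : ℕ) (c : ℕ → Fin n), c k = j ∧ wgt xp ym c k = w}

/-- The shortest-path potential. -/
noncomputable def pot (xp ym : Fin n → X) (j : Fin n) : ℝ := sInf (walkSet xp ym j)

lemma walkSet_nonempty (xp ym : Fin n → X) (j : Fin n) : (walkSet xp ym j).Nonempty :=
  ⟨0, 0, fun _ => j, rfl, by simp [wgt]⟩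

lemma walk_bddBelow (xp ym : Fin n → X)
    (hopt : ∀ σ : Equiv.Perm (Fin n),
      (∑ i, dist (xp i) (ym i)) ≤ ∑ i, dist (xp i) (ym (σ i)))
    (j : Fin n) : BddBelow (walkSet xp ym j) := by
  use -(n * ∑ i, dist (xp i) (ym i))
  intro w hw
  obtain ⟨k, c, hck, rfl⟩ := hw
  obtain ⟨k', c', hk', _, hle⟩ := exists_short xp ym hopt k c
  refine le_trans ?_ hle
  set B := ∑ i, dist (xp i) (ym i) with hB
  have hB0 : 0 ≤ B := Finset.sum_nonneg fun i _ => dist_nonneg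
  have hterm : ∀ a b : Fin n, -B ≤ W xp ym a b := by
    intro a b
    have h1 : dist (xp b) (ym b) ≤ B :=
      Finset.single_le_sum (fun i _ => dist_nonneg) (Finset.mem_univ b)
    have h2 : (0:ℝ) ≤ dist (xp b) (ym a) := dist_nonneg
    simp only [W]
    linarith
  calc -(↑n * B) ≤ -(↑k' * B) := by
        have : (k' : ℝ) * B ≤ n * B := by
          apply mul_le_mul_of_nonneg_right _ hB0
          exact_mod_cast hk'
        linarith
    _ = ∑ _t ∈ Finset.range k', (-B) := by
        rw [Finset.sum_const, Finset.card_range, nsmul_eq_mul]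
        ring
    _ ≤ wgt xp ym c' k' := Finset.sum_le_sum fun t _ => hterm _ _

lemma pot_le (xp ym : Fin n → X)
    (hopt : ∀ σ : Equiv.Perm (Fin n),
      (∑ i, dist (xp i) (ym i)) ≤ ∑ i, dist (xp i) (ym (σ i)))
    (i j : Fin n) : pot xp ym j ≤ pot xp ym i + W xp ym i j := by
  simp only [pot]
  have key : ∀ w ∈ walkSet xp ym i, sInf (walkSet xp ym j) - W xp ym i j ≤ w := by
    intro w hw
    obtain ⟨k, c, hck, rfl⟩ := hw
    set c₂ : ℕ → Fin n := fun r => if r ≤ k then c r else j with hc₂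
    have hmem : wgt xp ym c₂ (k + 1) ∈ walkSet xp ym j :=
      ⟨k + 1, c₂, by simp only [hc₂]; rw [if_neg (by omega)], rfl⟩
    have hval : wgt xp ym c₂ (k + 1) = wgt xp ym c k + W xp ym i j := by
      rw [wgt, Finset.sum_range_succ]
      congr 1
      · rw [wgt]
        apply Finset.sum_congr rfl
        intro t ht
        simp only [Finset.mem_range] at ht
        simp only [hc₂]
        rw [if_pos (by omega), if_pos (by omega)]
      · simp only [hc₂]
        rw [if_pos (le_refl k), if_neg (by omega), hck]
    have h3 := csInf_le (walk_bddBelow xp ym hopt j) hmem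
    rw [hval] at h3
    linarith
  have h2 : sInf (walkSet xp ym j) - W xp ym i j ≤ sInf (walkSet xp ym i) :=
    le_csInf (walkSet_nonempty xp ym i) key
  linarith

end KantorovichAux

open KantorovichAux in
/-- **Kantorovich duality.** Let `(X,d)` be a metric space of cardinality `2n`,
partitioned into the `n`-tuples `x⁺` and `x⁻` (the bijectivity of
`Sum.elim x⁺ x⁻ : Fin n ⊕ Fin n → X` expresses that these `2n` points are distinct and
exhaust `X`).  Then the minimum over permutations `σ` of `∑ i, d(x⁺ i, x⁻ (σ i))` equals
the maximum over `1`-Lipschitz functions `f : X → ℝ` of `∑ i, f (x⁺ i) - f (x⁻ i)`,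
and the maximum is attained. -/
theorem stmt1 {X : Type*} [MetricSpace X] (n : ℕ) (xp xm : Fin n → X)
    (hbij : Function.Bijective (Sum.elim xp xm)) :
    (∀ f : X → ℝ, LipschitzWith 1 f →
      (∑ i, (f (xp i) - f (xm i))) ≤
        ⨅ σ : Equiv.Perm (Fin n), ∑ i, dist (xp i) (xm (σ i))) ∧
    ∃ f : X → ℝ, LipschitzWith 1 f ∧
      (∑ i, (f (xp i) - f (xm i))) =
        ⨅ σ : Equiv.Perm (Fin n), ∑ i, dist (xp i) (xm (σ i)) := by
  have part1 : ∀ f : X → ℝ, LipschitzWith 1 f →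
      (∑ i, (f (xp i) - f (xm i))) ≤
        ⨅ σ : Equiv.Perm (Fin n), ∑ i, dist (xp i) (xm (σ i)) := by
    intro f hf
    apply le_ciInf
    intro σ
    have h1 : ∑ i, (f (xp i) - f (xm i)) = ∑ i, (f (xp i) - f (xm (σ i))) := by
      rw [Finset.sum_sub_distrib, Finset.sum_sub_distrib,
        Equiv.sum_comp σ (fun i => f (xm i))]
    rw [h1]
    apply Finset.sum_le_sum
    intro i _
    have h := hf.dist_le_mul (xp i) (xm (σ i))
    rw [Real.dist_eq] at h
    have h2 := le_abs_self (f (xp i) - f (xm (σ i)))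
    simp only [NNReal.coe_one, one_mul] at h
    linarith
  refine ⟨part1, ?_⟩
  obtain ⟨σ₀, hσ₀⟩ :=
    Finite.exists_min (fun σ : Equiv.Perm (Fin n) => ∑ i, dist (xp i) (xm (σ i)))
  set ym : Fin n → X := fun i => xm (σ₀ i) with hym
  have hopt : ∀ σ : Equiv.Perm (Fin n),
      (∑ i, dist (xp i) (ym i)) ≤ ∑ i, dist (xp i) (ym (σ i)) := by
    intro σ
    have h := hσ₀ (σ₀ * σ)
    simpa only [hym, Equiv.Perm.mul_apply] using h
  have hbij' : Function.Bijective (Sum.elim xp ym) := by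
    have heq : Sum.elim xp ym
        = (Sum.elim xp xm) ∘ (Equiv.sumCongr (Equiv.refl (Fin n)) σ₀) := by
      funext z; cases z <;> simp [hym]
    rw [heq]
    exact hbij.comp (Equiv.bijective _)
  set e := Equiv.ofBijective _ hbij' with he
  set u : Fin n → ℝ := pot xp ym with hu
  have hule : ∀ i j, u i ≤ u j + W xp ym j i := fun i j => pot_le xp ym hopt j i
  set v : Fin n ⊕ Fin n → ℝ := Sum.elim (fun i => u i + dist (xp i) (ym i)) u with hv
  have hvlip : ∀ a b, v a - v b ≤ dist (Sum.elim xp ym a) (Sum.elim xp ym b) := by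
    intro a b
    rcases a with i | i <;> rcases b with j | j <;>
      simp only [hv, Sum.elim_inl, Sum.elim_inr]
    · have h1 := hule i j
      simp only [W] at h1
      have h2 := dist_triangle (xp i) (xp j) (ym j)
      linarith
    · have h1 := hule i j
      simp only [W] at h1
      linarith
    · have h1 := hule i j
      simp only [W] at h1
      have h2 := dist_triangle4 (xp i) (ym i) (xp j) (ym j)
      linarith
    · have h1 := hule i j
      simp only [W] at h1
      have h2 := dist_triangle (xp i) (ym i) (ym j)
      linarith
  set f : X → ℝ := fun x => v (e.symm x) with hf
  have happ : ∀ z, e z = Sum.elim xp ym z := fun z => rfl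
  have hfp : ∀ i, f (xp i) = u i + dist (xp i) (ym i) := by
    intro i
    have h1 : xp i = e (Sum.inl i) := rfl
    simp only [hf, h1, Equiv.symm_apply_apply, hv, Sum.elim_inl]
  have hfm : ∀ i, f (ym i) = u i := by
    intro i
    have h1 : ym i = e (Sum.inr i) := rfl
    simp only [hf, h1, Equiv.symm_apply_apply, hv, Sum.elim_inr]
  have hlip : LipschitzWith 1 f := by
    apply LipschitzWith.of_dist_le_mul
    intro x y
    rw [NNReal.coe_one, one_mul, Real.dist_eq, abs_sub_le_iff]
    have hx : Sum.elim xp ym (e.symm x) = x := e.apply_symm_apply x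
    have hy : Sum.elim xp ym (e.symm y) = y := e.apply_symm_apply y
    constructor
    · have h1 := hvlip (e.symm x) (e.symm y)
      rw [hx, hy] at h1
      exact h1
    · have h1 := hvlip (e.symm y) (e.symm x)
      rw [hx, hy] at h1
      rw [dist_comm] at h1
      exact h1
  have hsum : ∑ i, (f (xp i) - f (xm i)) = ∑ i, dist (xp i) (ym i) := by
    have h1 : ∑ i, f (xm i) = ∑ i, f (ym i) := by
      simp only [hym]
      exact (Equiv.sum_comp σ₀ (fun i => f (xm i))).symm
    rw [Finset.sum_sub_distrib, h1, ← Finset.sum_sub_distrib]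
    apply Finset.sum_congr rfl
    intro i _
    rw [hfp, hfm]
    ring
  have hinf : (⨅ σ : Equiv.Perm (Fin n), ∑ i, dist (xp i) (xm (σ i)))
      = ∑ i, dist (xp i) (ym i) := by
    apply le_antisymm
    · exact ciInf_le (Set.finite_range _).bddBelow σ₀
    · exact le_ciInf hσ₀
  exact ⟨f, hlip, by rw [hsum, hinf]⟩
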